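/- Let α be a type, let ℓ, s, t be natural numbers with s ≤ t, and let p ∈ [0, 1] be a real number. Let A be a random finite sequence over α (a random variable on a probability space taking values in finite sequences of elements of α) such that for every integer k with s ≤ k ≤ t, with probability at least p the access graph of A has a k-partition each of whose parts contains at least ℓ/k edges (i.e., k · |E(b_i, m_i, b_{i+1})| ≥ ℓ for every part). Then the expected length of A is at least (p·ℓ/2) · (⌊log_4 t⌋ − ⌈log_4 s⌉). -/

import Mathlib

/-- `E(a, m, b)`: the set of edges `(u, v) ∈ E` with `a ≤ u < m` and `m ≤ v < b`. -/
def edgesBetween (E : Finset (ℕ × ℕ)) (a m b : ℕ) : Finset (ℕ × ℕ) :=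
  E.filter fun e => a ≤ e.1 ∧ e.1 < m ∧ m ≤ e.2 ∧ e.2 < b

/-- A `k`-partition of an ordered graph on `{0, ..., N-1}`: a sequence
`0 = b_0 ≤ m_0 ≤ b_1 ≤ m_1 ≤ ⋯ ≤ m_{k-1} ≤ b_k = N`. -/
def IsPartition (N k : ℕ) (b m : ℕ → ℕ) : Prop :=
  b 0 = 0 ∧ b k = N ∧ ∀ i < k, b i ≤ m i ∧ m i ≤ b (i + 1)

/-- The access graph of a finite sequence given as a list `l = a_0, ..., a_{N-1}`:
the ordered graph on vertex set `{0, ..., N-1}` (with `N = l.length`) whose edges are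
pairs `(i, j)` with `i < j`, `a_i = a_j`, and `a_k ≠ a_i` for all `i < k < j`. -/
def listAccessGraph {α : Type*} [DecidableEq α] (l : List α) : Finset (ℕ × ℕ) :=
  (Finset.range l.length ×ˢ Finset.range l.length).filter fun e =>
    e.1 < e.2 ∧ l[e.1]? = l[e.2]? ∧ ∀ k, k < e.2 → e.1 < k → l[k]? ≠ l[e.1]?

lemma mem_edgesBetween {E : Finset (ℕ × ℕ)} {a m b : ℕ} {e : ℕ × ℕ} :
    e ∈ edgesBetween E a m b ↔ e ∈ E ∧ a ≤ e.1 ∧ e.1 < m ∧ m ≤ e.2 ∧ e.2 < b := by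
  simp [edgesBetween]

lemma mem_listAccessGraph {α : Type*} [DecidableEq α] {l : List α} {e : ℕ × ℕ}
    (he : e ∈ listAccessGraph l) :
    e.1 < l.length ∧ e.1 < e.2 ∧ l[e.1]? = l[e.2]? ∧
      ∀ k, k < e.2 → e.1 < k → l[k]? ≠ l[e.1]? := by
  simp only [listAccessGraph, Finset.mem_filter, Finset.mem_product, Finset.mem_range] at he
  exact ⟨he.1.1, he.2.1, he.2.2.1, he.2.2.2⟩

lemma accessGraph_card_le {α : Type*} [DecidableEq α] (l : List α) :
    (listAccessGraph l).card ≤ l.length := by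
  have h := Finset.card_le_card_of_injOn (f := Prod.fst) (s := listAccessGraph l)
    (t := Finset.range l.length)
    (fun e he => Finset.mem_range.mpr (mem_listAccessGraph he).1)
    ?inj
  · simpa using h
  case inj =>
    intro e1 h1 e2 h2 h
    obtain ⟨-, hlt1, heq1, hmin1⟩ := mem_listAccessGraph (Finset.mem_coe.mp h1)
    obtain ⟨-, hlt2, heq2, hmin2⟩ := mem_listAccessGraph (Finset.mem_coe.mp h2)
    rcases lt_trichotomy e1.2 e2.2 with hc | hc | hc
    · exact absurd (by rw [← h]; exact heq1.symm) (hmin2 e1.2 hc (by omega))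
    · exact Prod.ext h hc
    · exact absurd (by rw [h]; exact heq2.symm) (hmin1 e2.2 hc (by omega))

lemma partition_b_mono {N k : ℕ} {b m : ℕ → ℕ} (h : IsPartition N k b m) :
    ∀ i j, i ≤ j → j ≤ k → b i ≤ b j := by
  intro i j hij hjk
  induction j with
  | zero =>
    have : i = 0 := Nat.le_zero.mp hij
    subst this; exact le_rfl
  | succ n ih =>
    rcases Nat.eq_or_lt_of_le hij with rfl | h'
    · exact le_rfl
    · have h1 : b i ≤ b n := ih (by omega) (by omega)
      have h2 := h.2.2 n (by omega)
      omega

lemma geom4 (n : ℕ) : 3 * ∑ j ∈ Finset.range n, 4 ^ j + 1 = 4 ^ n := by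
  induction n with
  | zero => simp
  | succ n ih =>
    rw [Finset.sum_range_succ]
    calc 3 * (∑ j ∈ Finset.range n, 4 ^ j + 4 ^ n) + 1
        = (3 * ∑ j ∈ Finset.range n, 4 ^ j + 1) + 3 * 4 ^ n := by ring
      _ = 4 ^ n + 3 * 4 ^ n := by rw [ih]
      _ = 4 ^ (n + 1) := by ring

lemma det_aux {α : Type*} [DecidableEq α] (l : List α) (L : ℕ) (S : Finset ℕ)
    (h : ∀ j ∈ S, ∃ b m : ℕ → ℕ, IsPartition l.length (4 ^ j) b m ∧
      ∀ i < 4 ^ j, L ≤ 4 ^ j * (edgesBetween (listAccessGraph l) (b i) (m i) (b (i + 1))).card) :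
    ∃ (C : Finset (ℕ × ℕ)) (P : Finset ℕ),
      C ⊆ listAccessGraph l ∧
      (∀ e ∈ C, ∃ μ ∈ P, e.1 < μ ∧ μ ≤ e.2) ∧
      P.card ≤ ∑ j ∈ S, 4 ^ j ∧
      S.card * L ≤ 2 * C.card := by
  classical
  revert h
  induction S using Finset.induction_on_max with
  | empty => exact fun _ => ⟨∅, ∅, by simp, by simp, by simp, by simp⟩
  | insert a S' hmax ih =>
    intro h
    obtain ⟨C', P', hCsub, hCcross, hPcard, hCcount⟩ :=
      ih (fun j hj => h j (Finset.mem_insert_of_mem hj))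
    obtain ⟨b, m, hpart, hcnt⟩ := h a (Finset.mem_insert_self a S')
    set k := 4 ^ a with hk
    have hkpos : 0 < k := by positivity
    have haS' : a ∉ S' := fun hin => lt_irrefl a (hmax a hin)
    set pred : ℕ → Prop := fun i => ∃ μ ∈ P', b i < μ ∧ μ < b (i + 1) with hpred
    set U : Finset ℕ := (Finset.range k).filter (fun i => ¬ pred i) with hU
    set B : Finset ℕ := (Finset.range k).filter pred with hB
    set D : ℕ → Finset (ℕ × ℕ) :=
      fun i => edgesBetween (listAccessGraph l) (b i) (m i) (b (i + 1)) with hD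
    have hDdisj : ∀ i1 ∈ U, ∀ i2 ∈ U, i1 ≠ i2 → Disjoint (D i1) (D i2) := by
      intro i1 h1 i2 h2 hne
      have hi1 : i1 < k := Finset.mem_range.mp (Finset.mem_filter.mp h1).1
      have hi2 : i2 < k := Finset.mem_range.mp (Finset.mem_filter.mp h2).1
      rw [Finset.disjoint_left]
      intro e he1 he2
      obtain ⟨-, ha1, hb1, hc1, hd1⟩ := mem_edgesBetween.mp he1
      obtain ⟨-, ha2, hb2, hc2, hd2⟩ := mem_edgesBetween.mp he2
      rcases Nat.lt_or_ge i1 i2 with hlt | hge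
      · have hmo := partition_b_mono hpart (i1 + 1) i2 (by omega) (by omega)
        have hm1 := hpart.2.2 i1 hi1
        omega
      · have hlt : i2 < i1 := by omega
        have hmo := partition_b_mono hpart (i2 + 1) i1 (by omega) (by omega)
        have hm2 := hpart.2.2 i2 hi2
        omega
    set F : Finset (ℕ × ℕ) := U.biUnion D with hF
    have hFcard : F.card = ∑ i ∈ U, (D i).card := Finset.card_biUnion hDdisj
    have hFsub : F ⊆ listAccessGraph l := by
      intro e he
      obtain ⟨i, hi, hei⟩ := Finset.mem_biUnion.mp he
      exact (mem_edgesBetween.mp hei).1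
    have hCF : Disjoint C' F := by
      rw [Finset.disjoint_right]
      intro e heF heC
      obtain ⟨i, hiU, hei⟩ := Finset.mem_biUnion.mp heF
      obtain ⟨-, ha1, hb1, hc1, hd1⟩ := mem_edgesBetween.mp hei
      obtain ⟨μ, hμP, hμ1, hμ2⟩ := hCcross e heC
      exact (Finset.mem_filter.mp hiU).2 ⟨μ, hμP, by omega, by omega⟩
    have hBcard : B.card ≤ P'.card := by
      apply Finset.card_le_card_of_injOn (f := fun i => if hp : pred i then hp.choose else 0)
      · intro i hi
        have hp : pred i := (Finset.mem_filter.mp hi).2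
        simp only [dif_pos hp]
        exact hp.choose_spec.1
      · intro i1 h1 i2 h2 heq
        have hm1 := Finset.mem_filter.mp (Finset.mem_coe.mp h1)
        have hm2 := Finset.mem_filter.mp (Finset.mem_coe.mp h2)
        have hp1 : pred i1 := hm1.2
        have hp2 : pred i2 := hm2.2
        have hi1 : i1 < k := Finset.mem_range.mp hm1.1
        have hi2 : i2 < k := Finset.mem_range.mp hm2.1
        simp only [dif_pos hp1, dif_pos hp2] at heq
        obtain ⟨-, hs1, hs1'⟩ := hp1.choose_spec
        obtain ⟨-, hs2, hs2'⟩ := hp2.choose_spec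
        by_contra hne
        rcases Nat.lt_or_ge i1 i2 with hlt | hge
        · have hmo := partition_b_mono hpart (i1 + 1) i2 (by omega) (by omega)
          omega
        · have hlt : i2 < i1 := by omega
          have hmo := partition_b_mono hpart (i2 + 1) i1 (by omega) (by omega)
          omega
    have hUB : U.card + B.card = k := by
      rw [hU, hB]
      have h1 := Finset.card_filter_add_card_filter_not
        (s := Finset.range k) (p := pred)
      rw [Finset.card_range] at h1
      omega
    have hS'sum : ∑ j ∈ S', 4 ^ j ≤ ∑ j ∈ Finset.range a, 4 ^ j := by
      apply Finset.sum_le_sum_of_subset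
      intro x hx
      exact Finset.mem_range.mpr (hmax x hx)
    have hgeom := geom4 a
    have hBk : 3 * B.card + 1 ≤ k := by omega
    have hDc : ∀ i ∈ U, L ≤ k * (D i).card := by
      intro i hi
      exact hcnt i (Finset.mem_range.mp (Finset.mem_filter.mp hi).1)
    have hLF : k * L ≤ k * (2 * F.card) := by
      have h1 : U.card * L ≤ k * F.card := by
        rw [hFcard, Finset.mul_sum]
        calc U.card * L = ∑ _i ∈ U, L := by rw [Finset.sum_const, smul_eq_mul]
          _ ≤ ∑ i ∈ U, k * (D i).card := Finset.sum_le_sum hDc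
      have h2 : k ≤ 2 * U.card := by omega
      calc k * L ≤ (2 * U.card) * L := Nat.mul_le_mul_right _ h2
        _ = 2 * (U.card * L) := by ring
        _ ≤ 2 * (k * F.card) := by omega
        _ = k * (2 * F.card) := by ring
    have hLF2 : L ≤ 2 * F.card := Nat.le_of_mul_le_mul_left hLF hkpos
    refine ⟨C' ∪ F, P' ∪ (Finset.range k).image m, ?_, ?_, ?_, ?_⟩
    · exact Finset.union_subset hCsub hFsub
    · intro e he
      rcases Finset.mem_union.mp he with he | he
      · obtain ⟨μ, hμ, h1, h2⟩ := hCcross e he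
        exact ⟨μ, Finset.mem_union_left _ hμ, h1, h2⟩
      · obtain ⟨i, hiU, hei⟩ := Finset.mem_biUnion.mp he
        obtain ⟨-, ha1, hb1, hc1, hd1⟩ := mem_edgesBetween.mp hei
        exact ⟨m i, Finset.mem_union_right _
          (Finset.mem_image_of_mem m (Finset.mem_filter.mp hiU).1), hb1, hc1⟩
    · calc (P' ∪ (Finset.range k).image m).card
          ≤ P'.card + ((Finset.range k).image m).card := Finset.card_union_le _ _
        _ ≤ (∑ j ∈ S', 4 ^ j) + k := by
            have h1 := Finset.card_image_le (s := Finset.range k) (f := m)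
            rw [Finset.card_range] at h1
            omega
        _ = ∑ j ∈ insert a S', 4 ^ j := by rw [Finset.sum_insert haS']; omega
    · have hcard : (C' ∪ F).card = C'.card + F.card := Finset.card_union_of_disjoint hCF
      rw [Finset.card_insert_of_notMem haS', hcard]
      have hmulexp : (S'.card + 1) * L = S'.card * L + L := by ring
      omega

lemma det_lemma {α : Type*} [DecidableEq α] (l : List α) (L : ℕ) (S : Finset ℕ)
    (h : ∀ j ∈ S, ∃ b m : ℕ → ℕ, IsPartition l.length (4 ^ j) b m ∧
      ∀ i < 4 ^ j, L ≤ 4 ^ j * (edgesBetween (listAccessGraph l) (b i) (m i) (b (i + 1))).card) :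
    S.card * L ≤ 2 * l.length := by
  obtain ⟨C, P, hsub, -, -, hcount⟩ := det_aux l L S h
  have h1 := Finset.card_le_card hsub
  have h2 := accessGraph_card_le l
  omega

/-- The event that the access graph of `A ω` has a good `k`-partition. -/
def goodEvent {α : Type*} [DecidableEq α] {Ω : Type*} (A : Ω → List α) (L k : ℕ) : Set Ω :=
  {ω | ∃ b m : ℕ → ℕ, IsPartition (A ω).length k b m ∧
    ∀ i < k, L ≤ k * (edgesBetween (listAccessGraph (A ω)) (b i) (m i) (b (i + 1))).card}

open MeasureTheory Real in
theorem stmt_13 {α : Type*} [DecidableEq α]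
    {Ω : Type*} [MeasurableSpace Ω] (μ : Measure Ω) [IsProbabilityMeasure μ]
    (ℓ s t : ℕ) (hst : s ≤ t) (p : ℝ) (hp0 : 0 ≤ p) (hp1 : p ≤ 1)
    (A : Ω → List α)
    (hmeas : ∀ k, s ≤ k → k ≤ t → MeasurableSet {ω | ∃ b m : ℕ → ℕ,
      IsPartition (A ω).length k b m ∧
      ∀ i < k, ℓ ≤ k * (edgesBetween (listAccessGraph (A ω)) (b i) (m i) (b (i + 1))).card})
    (hprob : ∀ k, s ≤ k → k ≤ t → ENNReal.ofReal p ≤ μ {ω | ∃ b m : ℕ → ℕ,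
      IsPartition (A ω).length k b m ∧
      ∀ i < k, ℓ ≤ k * (edgesBetween (listAccessGraph (A ω)) (b i) (m i) (b (i + 1))).card}) :
    ENNReal.ofReal (p * ℓ / 2 * ((⌊logb 4 (t : ℝ)⌋ - ⌈logb 4 (s : ℝ)⌉ : ℤ) : ℝ))
      ≤ ∫⁻ ω, ((A ω).length : ENNReal) ∂μ := by
  classical
  by_cases hd0 : (⌊logb 4 (t : ℝ)⌋ - ⌈logb 4 (s : ℝ)⌉ : ℤ) ≤ 0
  · have h0 : p * ℓ / 2 * ((⌊logb 4 (t : ℝ)⌋ - ⌈logb 4 (s : ℝ)⌉ : ℤ) : ℝ) ≤ 0 := by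
      apply mul_nonpos_of_nonneg_of_nonpos
      · positivity
      · exact_mod_cast hd0
    rw [ENNReal.ofReal_eq_zero.mpr h0]
    exact zero_le
  · push_neg at hd0
    have hceil0 : (0 : ℤ) ≤ ⌈logb 4 (s : ℝ)⌉ := by
      rcases Nat.eq_zero_or_pos s with rfl | hs
      · simp
      · exact Int.ceil_nonneg (Real.logb_nonneg (by norm_num)
          (by exact_mod_cast hs))
    have hfloor1 : (1 : ℤ) ≤ ⌊logb 4 (t : ℝ)⌋ := by omega
    have ht1 : 1 ≤ t := by
      by_contra ht
      have ht0 : t = 0 := by omega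
      subst ht0
      norm_num at hfloor1
    set j0 : ℕ := (⌈logb 4 (s : ℝ)⌉).toNat with hj0
    set j1 : ℕ := (⌊logb 4 (t : ℝ)⌋).toNat with hj1
    have hj0' : (j0 : ℤ) = ⌈logb 4 (s : ℝ)⌉ := Int.toNat_of_nonneg hceil0
    have hj1' : (j1 : ℤ) = ⌊logb 4 (t : ℝ)⌋ := Int.toNat_of_nonneg (by omega)
    have hj01 : j0 ≤ j1 := by omega
    have hs_le : ∀ j, j0 ≤ j → s ≤ 4 ^ j := by
      intro j hj
      rcases Nat.eq_zero_or_pos s with rfl | hs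
      · exact Nat.zero_le _
      have hs' : (0 : ℝ) < (s : ℝ) := by exact_mod_cast hs
      have h1 : logb 4 (s : ℝ) ≤ (j : ℝ) := by
        have h2 := Int.le_ceil (logb 4 (s : ℝ))
        have h3 : ((⌈logb 4 (s : ℝ)⌉ : ℤ) : ℝ) ≤ ((j : ℤ) : ℝ) := by
          exact_mod_cast (by omega : (⌈logb 4 (s : ℝ)⌉ : ℤ) ≤ (j : ℤ))
        calc logb 4 (s : ℝ) ≤ ((⌈logb 4 (s : ℝ)⌉ : ℤ) : ℝ) := h2
          _ ≤ ((j : ℤ) : ℝ) := h3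
          _ = (j : ℝ) := by push_cast; ring
      have h2 : (s : ℝ) ≤ (4 : ℝ) ^ (j : ℝ) := by
        calc (s : ℝ) = (4 : ℝ) ^ logb 4 (s : ℝ) :=
              (Real.rpow_logb (by norm_num) (by norm_num) hs').symm
          _ ≤ (4 : ℝ) ^ (j : ℝ) :=
              Real.rpow_le_rpow_of_exponent_le (by norm_num) h1
      have h3 : ((4 ^ j : ℕ) : ℝ) = (4 : ℝ) ^ (j : ℝ) := by
        rw [Real.rpow_natCast]; push_cast; ring
      exact_mod_cast h3 ▸ h2
    have ht_le : ∀ j, j ≤ j1 → 4 ^ j ≤ t := by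
      intro j hj
      have h1 : (j : ℝ) ≤ logb 4 (t : ℝ) := by
        have h2 := Int.floor_le (logb 4 (t : ℝ))
        have h3 : ((j : ℤ) : ℝ) ≤ ((⌊logb 4 (t : ℝ)⌋ : ℤ) : ℝ) := by
          exact_mod_cast (by omega : (j : ℤ) ≤ ⌊logb 4 (t : ℝ)⌋)
        calc (j : ℝ) = ((j : ℤ) : ℝ) := by push_cast; ring
          _ ≤ ((⌊logb 4 (t : ℝ)⌋ : ℤ) : ℝ) := h3
          _ ≤ logb 4 (t : ℝ) := h2
      have h2 : (4 : ℝ) ^ (j : ℝ) ≤ (t : ℝ) := by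
        calc (4 : ℝ) ^ (j : ℝ) ≤ (4 : ℝ) ^ logb 4 (t : ℝ) :=
              Real.rpow_le_rpow_of_exponent_le (by norm_num) h1
          _ = (t : ℝ) := Real.rpow_logb (by norm_num) (by norm_num)
              (by exact_mod_cast ht1)
      have h3 : ((4 ^ j : ℕ) : ℝ) = (4 : ℝ) ^ (j : ℝ) := by
        rw [Real.rpow_natCast]; push_cast; ring
      exact_mod_cast h3 ▸ h2
    have hmeasE : ∀ j ∈ Finset.Icc j0 j1, MeasurableSet (goodEvent A ℓ (4 ^ j)) := by
      intro j hj
      obtain ⟨hja, hjb⟩ := Finset.mem_Icc.mp hj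
      exact hmeas _ (hs_le j hja) (ht_le j hjb)
    have hprobE : ∀ j ∈ Finset.Icc j0 j1, ENNReal.ofReal p ≤ μ (goodEvent A ℓ (4 ^ j)) := by
      intro j hj
      obtain ⟨hja, hjb⟩ := Finset.mem_Icc.mp hj
      exact hprob _ (hs_le j hja) (ht_le j hjb)
    have key : ∀ ω, ∑ j ∈ Finset.Icc j0 j1,
        (goodEvent A ℓ (4 ^ j)).indicator (fun _ => ENNReal.ofReal ((ℓ : ℝ) / 2)) ω
        ≤ ((A ω).length : ENNReal) := by
      intro ω
      have hsum : ∑ j ∈ Finset.Icc j0 j1,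
          (goodEvent A ℓ (4 ^ j)).indicator (fun _ => ENNReal.ofReal ((ℓ : ℝ) / 2)) ω
          = ∑ j ∈ (Finset.Icc j0 j1).filter (fun j => ω ∈ goodEvent A ℓ (4 ^ j)),
              ENNReal.ofReal ((ℓ : ℝ) / 2) := by
        rw [Finset.sum_filter]
        apply Finset.sum_congr rfl
        intro j hj
        by_cases hω : ω ∈ goodEvent A ℓ (4 ^ j) <;> simp [Set.indicator_apply, hω]
      rw [hsum, Finset.sum_const, nsmul_eq_mul]
      set Sω := (Finset.Icc j0 j1).filter (fun j => ω ∈ goodEvent A ℓ (4 ^ j)) with hSω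
      have hdet : Sω.card * ℓ ≤ 2 * (A ω).length := by
        apply det_lemma
        intro j hj
        exact (Finset.mem_filter.mp hj).2
      have heq1 : (Sω.card : ENNReal) * ENNReal.ofReal ((ℓ : ℝ) / 2)
          = ENNReal.ofReal ((Sω.card : ℝ) * ((ℓ : ℝ) / 2)) := by
        rw [ENNReal.ofReal_mul (by positivity)]
        congr 1
        exact (ENNReal.ofReal_natCast _).symm
      rw [heq1, ← ENNReal.ofReal_natCast ((A ω).length)]
      apply ENNReal.ofReal_le_ofReal
      have hc : ((Sω.card * ℓ : ℕ) : ℝ) ≤ ((2 * (A ω).length : ℕ) : ℝ) := by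
        exact_mod_cast hdet
      push_cast at hc
      linarith
    calc ENNReal.ofReal (p * ℓ / 2 * ((⌊logb 4 (t : ℝ)⌋ - ⌈logb 4 (s : ℝ)⌉ : ℤ) : ℝ))
        ≤ ENNReal.ofReal ((p * ((ℓ : ℝ) / 2)) * ((Finset.Icc j0 j1).card : ℝ)) := by
          apply ENNReal.ofReal_le_ofReal
          have hcc : (Finset.Icc j0 j1).card = j1 + 1 - j0 := Nat.card_Icc j0 j1
          have hci : ((⌊logb 4 (t : ℝ)⌋ - ⌈logb 4 (s : ℝ)⌉ : ℤ))
              ≤ ((Finset.Icc j0 j1).card : ℤ) := by omega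
          have hcr : (((⌊logb 4 (t : ℝ)⌋ - ⌈logb 4 (s : ℝ)⌉ : ℤ)) : ℝ)
              ≤ ((Finset.Icc j0 j1).card : ℝ) := by exact_mod_cast hci
          have hnn : (0 : ℝ) ≤ p * ((ℓ : ℝ) / 2) := by positivity
          calc p * ℓ / 2 * ((⌊logb 4 (t : ℝ)⌋ - ⌈logb 4 (s : ℝ)⌉ : ℤ) : ℝ)
              = (p * ((ℓ : ℝ) / 2)) * ((⌊logb 4 (t : ℝ)⌋ - ⌈logb 4 (s : ℝ)⌉ : ℤ) : ℝ) := by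
                ring
            _ ≤ (p * ((ℓ : ℝ) / 2)) * ((Finset.Icc j0 j1).card : ℝ) :=
                mul_le_mul_of_nonneg_left hcr hnn
      _ = ∑ _j ∈ Finset.Icc j0 j1, ENNReal.ofReal p * ENNReal.ofReal ((ℓ : ℝ) / 2) := by
          rw [Finset.sum_const, nsmul_eq_mul]
          rw [ENNReal.ofReal_mul (by positivity), ENNReal.ofReal_mul hp0,
            ENNReal.ofReal_natCast]
          ring
      _ ≤ ∑ j ∈ Finset.Icc j0 j1, μ (goodEvent A ℓ (4 ^ j)) * ENNReal.ofReal ((ℓ : ℝ) / 2) :=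
          Finset.sum_le_sum (fun j hj => mul_le_mul_left (hprobE j hj) _)
      _ = ∑ j ∈ Finset.Icc j0 j1, ∫⁻ ω,
            (goodEvent A ℓ (4 ^ j)).indicator (fun _ => ENNReal.ofReal ((ℓ : ℝ) / 2)) ω ∂μ := by
          refine Finset.sum_congr rfl fun j hj => ?_
          rw [MeasureTheory.lintegral_indicator_const (hmeasE j hj), mul_comm]
      _ = ∫⁻ ω, ∑ j ∈ Finset.Icc j0 j1,
            (goodEvent A ℓ (4 ^ j)).indicator (fun _ => ENNReal.ofReal ((ℓ : ℝ) / 2)) ω ∂μ :=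
          (MeasureTheory.lintegral_finset_sum _
            (fun j hj => measurable_const.indicator (hmeasE j hj))).symm
      _ ≤ ∫⁻ ω, ((A ω).length : ENNReal) ∂μ := MeasureTheory.lintegral_mono key
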